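/- Let a < b be positive integers with b ≠ 2a and X = {a, b, a+b}. Then the Grundy sequence of the all-but subtraction game with excluded set X is purely arithmetic periodic: there exist p > 0 and s ∈ ℕ such that for all n ∈ ℕ, G(n + p) = G(n) + s. -/

import Mathlib

/-- The minimum excludant of a set of naturals. -/
noncomputable def mex (S : Set ℕ) : ℕ := sInf {m | m ∉ S}

/-- `G` is the Grundy (nim) sequence of the all-but subtraction game with
excluded set `X`: `G n = mex { G (n - t) : t > 0, t ∉ X, t ≤ n }`. -/
def IsGrundy (X : Set ℕ) (G : ℕ → ℕ) : Prop :=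
  ∀ n, G n = mex {m | ∃ t, 0 < t ∧ t ∉ X ∧ t ≤ n ∧ G (n - t) = m}

set_option linter.unusedVariables false
set_option linter.unreachableTactic false
set_option linter.unusedTactic false
set_option linter.unusedSectionVars false
set_option linter.unusedVariables false

def rword (a b : ℕ) : ℕ → ℕ
  | n =>
    if h0 : 0 < a ∧ a < b then
      if h3 : a + b ≤ n then
        if rword a b (n - (a + b)) = 0 then 3
        else if rword a b (n - b) = 0 ∧ rword a b (n - b + a) ≠ 1 then 2
        else if rword a b (n - a) = 0 then 1
        else 0
      else if h2 : b ≤ n then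
        if rword a b (n - b) = 0 ∧ rword a b (n - b + a) ≠ 1 then 2
        else if rword a b (n - a) = 0 then 1
        else 0
      else if h1 : a ≤ n then
        if rword a b (n - a) = 0 then 1 else 0
      else 0
    else 0
termination_by n => n
decreasing_by all_goals omega

section Facts

variable {a b : ℕ} (ha : 0 < a) (hab : a < b)

include ha hab

lemma rword_spec (n : ℕ) :
    rword a b n =
      (if a + b ≤ n ∧ rword a b (n - (a + b)) = 0 then 3
       else if b ≤ n ∧ rword a b (n - b) = 0 ∧ rword a b (n - b + a) ≠ 1 then 2
       else if a ≤ n ∧ rword a b (n - a) = 0 then 1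
       else 0) := by
  conv_lhs => rw [rword]
  split_ifs <;> omega

lemma rcases4 (n : ℕ) : rword a b n = 0 ∨ rword a b n = 1 ∨ rword a b n = 2 ∨ rword a b n = 3 := by
  rw [rword_spec ha hab]; split_ifs <;> omega

lemma F3 (n : ℕ) : rword a b n = 3 ↔ (a + b ≤ n ∧ rword a b (n - (a + b)) = 0) := by
  rw [rword_spec ha hab]; split_ifs <;> simp_all

lemma F2 (n : ℕ) : rword a b n = 2 ↔
    (¬(a + b ≤ n ∧ rword a b (n - (a + b)) = 0) ∧
      b ≤ n ∧ rword a b (n - b) = 0 ∧ rword a b (n - b + a) ≠ 1) := by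
  rw [rword_spec ha hab]; split_ifs <;> simp_all <;> omega

lemma F1 (n : ℕ) : rword a b n = 1 ↔
    (¬(a + b ≤ n ∧ rword a b (n - (a + b)) = 0) ∧
      ¬(b ≤ n ∧ rword a b (n - b) = 0 ∧ rword a b (n - b + a) ≠ 1) ∧
      a ≤ n ∧ rword a b (n - a) = 0) := by
  rw [rword_spec ha hab]; split_ifs <;> simp_all <;> omega

lemma F0 (n : ℕ) : rword a b n = 0 ↔
    (¬(a + b ≤ n ∧ rword a b (n - (a + b)) = 0) ∧
      ¬(b ≤ n ∧ rword a b (n - b) = 0 ∧ rword a b (n - b + a) ≠ 1) ∧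
      ¬(a ≤ n ∧ rword a b (n - a) = 0)) := by
  rw [rword_spec ha hab]; split_ifs <;> simp_all <;> omega

lemma claimA {x : ℕ} (hx : rword a b x = 0) : rword a b (x + a) ≠ 0 := by
  intro h
  rw [F0 ha hab] at h
  exact h.2.2 ⟨by omega, by simpa using hx⟩

lemma third {x : ℕ} (hx : rword a b x = 0) : rword a b (x + (a + b)) = 3 := by
  rw [F3 ha hab]; constructor; · omega
  · simpa using hx

lemma second {x : ℕ} (hx : rword a b x = 0) (hxa : rword a b (x + a) ≠ 1) :
    rword a b (x + b) = 2 := by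
  rw [F2 ha hab]
  refine ⟨?_, by omega, by simpa using hx, by
    have : x + b - b + a = x + a := by omega
    rw [this]; exact hxa⟩
  rintro ⟨hle, h0⟩
  have hax : a ≤ x := by omega
  have : x + b - (a + b) = x - a := by omega
  rw [this] at h0
  have := claimA ha hab h0
  have hxx : x - a + a = x := by omega
  rw [hxx] at this
  exact this hx

lemma backward (m : ℕ) :
    rword a b m =
      (if rword a b (m + (a + b)) = 3 then 0
       else if rword a b (m + b) = 3 ∧ rword a b (m + (b - a)) ≠ 2 then 1
       else if rword a b (m + a) = 3 then 2
       else 3) := by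
  have e0 : rword a b m ≠ 0 → rword a b (m + (a + b)) ≠ 3 := by
    intro h hh
    rw [F3 ha hab] at hh
    have : m + (a + b) - (a + b) = m := by omega
    rw [this] at hh
    exact h hh.2
  rcases rcases4 ha hab m with h | h | h | h
  · rw [h, if_pos (third ha hab h)]
  · obtain ⟨hc3, hc2, ham, hma⟩ := (F1 ha hab m).mp h
    have e1 : rword a b (m + b) = 3 := by
      rw [F3 ha hab]
      constructor
      · omega
      · have : m + b - (a + b) = m - a := by omega
        rw [this]; exact hma
    have e2 : rword a b (m + (b - a)) ≠ 2 := by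
      intro hh
      obtain ⟨_, hble, h0, hne1⟩ := (F2 ha hab _).mp hh
      have : m + (b - a) - b + a = m := by omega
      rw [this] at hne1
      exact hne1 h
    rw [h, if_neg (e0 (by omega)), if_pos ⟨e1, e2⟩]
  · obtain ⟨hc3, hbm, h0, hne⟩ := (F2 ha hab m).mp h
    have econd : ¬(rword a b (m + b) = 3 ∧ rword a b (m + (b - a)) ≠ 2) := by
      rintro ⟨hh, hh2⟩
      rw [F3 ha hab] at hh
      have ham : a ≤ m := by omega
      have e : m + b - (a + b) = m - a := by omega
      rw [e] at hh
      have hsec := second ha hab hh.2 (by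
        have : m - a + a = m := by omega
        rw [this, h]; omega)
      have : m - a + b = m + (b - a) := by omega
      rw [this] at hsec
      exact hh2 hsec
    have e3 : rword a b (m + a) = 3 := by
      rw [F3 ha hab]
      constructor
      · omega
      · have : m + a - (a + b) = m - b := by omega
        rw [this]; exact h0
    rw [h, if_neg (e0 (by omega)), if_neg econd, if_pos e3]
  · obtain ⟨habm, h0⟩ := (F3 ha hab m).mp h
    have econd : ¬(rword a b (m + b) = 3 ∧ rword a b (m + (b - a)) ≠ 2) := by
      rintro ⟨hh, hh2⟩
      rw [F3 ha hab] at hh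
      have e : m + b - (a + b) = m - a := by omega
      rw [e] at hh
      have hsec := second ha hab hh.2 (by
        have : m - a + a = m := by omega
        rw [this, h]; omega)
      have : m - a + b = m + (b - a) := by omega
      rw [this] at hsec
      exact hh2 hsec
    have e3 : rword a b (m + a) ≠ 3 := by
      intro hh
      rw [F3 ha hab] at hh
      have e : m + a - (a + b) = m - b := by omega
      rw [e] at hh
      have := claimA ha hab h0
      have e2 : m - (a + b) + a = m - b := by omega
      rw [e2] at this
      exact this hh.2
    rw [h, if_neg (e0 (by omega)), if_neg econd, if_neg e3]

lemma rlt4 (n : ℕ) : rword a b n < 4 := by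
  rcases rcases4 ha hab n with h | h | h | h <;> omega

lemma window_down {i j : ℕ} (hij : i < j)
    (H : ∀ k < a + b, rword a b (i + k) = rword a b (j + k)) :
    ∀ k < a + b, rword a b k = rword a b (j - i + k) := by
  -- step down one
  have step : ∀ i' j' : ℕ, i' < j' →
      (∀ k < a + b, rword a b (i' + 1 + k) = rword a b (j' + 1 + k)) →
      (∀ k < a + b, rword a b (i' + k) = rword a b (j' + k)) := by
    intro i' j' hlt Hd k hk
    rcases Nat.eq_zero_or_pos k with rfl | hkpos
    · have A1 : rword a b (i' + (a + b)) = rword a b (j' + (a + b)) := by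
        have := Hd (a + b - 1) (by omega)
        rw [show i' + 1 + (a + b - 1) = i' + (a + b) by omega,
            show j' + 1 + (a + b - 1) = j' + (a + b) by omega] at this
        exact this
      have A2 : rword a b (i' + b) = rword a b (j' + b) := by
        have := Hd (b - 1) (by omega)
        rw [show i' + 1 + (b - 1) = i' + b by omega,
            show j' + 1 + (b - 1) = j' + b by omega] at this
        exact this
      have A3 : rword a b (i' + (b - a)) = rword a b (j' + (b - a)) := by
        rcases Nat.eq_zero_or_pos (b - a) with hz | hpos
        · omega
        have := Hd (b - a - 1) (by omega)
        rw [show i' + 1 + (b - a - 1) = i' + (b - a) by omega,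
            show j' + 1 + (b - a - 1) = j' + (b - a) by omega] at this
        exact this
      have A4 : rword a b (i' + a) = rword a b (j' + a) := by
        have := Hd (a - 1) (by omega)
        rw [show i' + 1 + (a - 1) = i' + a by omega,
            show j' + 1 + (a - 1) = j' + a by omega] at this
        exact this
      rw [show i' + 0 = i' by omega, show j' + 0 = j' by omega,
          backward ha hab i', backward ha hab j', A1, A2, A3, A4]
    · have := Hd (k - 1) (by omega)
      rw [show i' + 1 + (k - 1) = i' + k by omega,
          show j' + 1 + (k - 1) = j' + k by omega] at this
      exact this
  have main : ∀ d, d ≤ i → ∀ k < a + b, rword a b (i - d + k) = rword a b (j - d + k) := by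
    intro d
    induction d with
    | zero => intro _ k hk; simpa using H k hk
    | succ d ih =>
      intro hd k hk
      have hstep := step (i - (d + 1)) (j - (d + 1)) (by omega)
      have : ∀ k < a + b, rword a b (i - (d + 1) + 1 + k) = rword a b (j - (d + 1) + 1 + k) := by
        intro k hk
        have := ih (by omega) k hk
        rw [show i - d + k = i - (d + 1) + 1 + k by omega,
            show j - d + k = j - (d + 1) + 1 + k by omega] at this
        exact this
      exact hstep this k hk
  intro k hk
  have := main i le_rfl k hk
  rw [show i - i = 0 by omega] at this
  simpa using this

lemma rword_periodic : ∃ q, 0 < q ∧ ∀ n, rword a b (n + q) = rword a b n := by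
  have hfin : Finite (Fin (a + b) → Fin 4) := by infer_instance
  obtain ⟨i, j, hne, hij⟩ := Finite.exists_ne_map_eq_of_infinite
    (fun n : ℕ => fun k : Fin (a + b) => (⟨rword a b (n + k), rlt4 ha hab _⟩ : Fin 4))
  have key : ∀ i j : ℕ, i < j →
      (∀ k < a + b, rword a b (i + k) = rword a b (j + k)) →
      ∃ q, 0 < q ∧ ∀ n, rword a b (n + q) = rword a b n := by
    intro i j hlt H
    have base := window_down ha hab hlt H
    refine ⟨j - i, by omega, ?_⟩
    intro n
    induction n using Nat.strong_induction_on with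
    | _ n IH =>
      rcases lt_or_ge n (a + b) with hn | hn
      · have := base n hn
        rw [show j - i + n = n + (j - i) by omega] at this
        exact this.symm
      · have E3 : rword a b (n + (j - i) - (a + b)) = rword a b (n - (a + b)) := by
          rw [show n + (j - i) - (a + b) = n - (a + b) + (j - i) by omega]
          exact IH _ (by omega)
        have E2 : rword a b (n + (j - i) - b) = rword a b (n - b) := by
          rw [show n + (j - i) - b = n - b + (j - i) by omega]
          exact IH _ (by omega)
        have E2' : rword a b (n + (j - i) - b + a) = rword a b (n - b + a) := by
          rw [show n + (j - i) - b + a = n - b + a + (j - i) by omega]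
          exact IH _ (by omega)
        have E1 : rword a b (n + (j - i) - a) = rword a b (n - a) := by
          rw [show n + (j - i) - a = n - a + (j - i) by omega]
          exact IH _ (by omega)
        rw [rword_spec ha hab (n + (j - i)), rword_spec ha hab n, E3, E2, E2', E1]
        simp only [show (a + b ≤ n + (j - i)) = True by simp; omega,
          show (a + b ≤ n) = True by simp; omega,
          show (b ≤ n + (j - i)) = True by simp; omega,
          show (b ≤ n) = True by simp; omega,
          show (a ≤ n + (j - i)) = True by simp; omega,
          show (a ≤ n) = True by simp; omega]
  have Hw : ∀ {i j : ℕ}, ((fun n : ℕ => fun k : Fin (a + b) => (⟨rword a b (n + k), rlt4 ha hab _⟩ : Fin 4)) i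
      = (fun n : ℕ => fun k : Fin (a + b) => (⟨rword a b (n + k), rlt4 ha hab _⟩ : Fin 4)) j) →
      ∀ k < a + b, rword a b (i + k) = rword a b (j + k) := by
    intro i j h k hk
    have := congrFun h ⟨k, hk⟩
    simpa using this
  rcases lt_or_gt_of_ne hne with hlt | hlt
  · exact key i j hlt (Hw hij)
  · exact key j i hlt (Hw hij.symm)

end Facts

def rrank (a b n : ℕ) : ℕ := ((Finset.range n).filter (fun k => rword a b k = 0)).card

def offr (a b r : ℕ) : ℕ := if r = 1 then a else if r = 2 then b else if r = 3 then a + b else 0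

def sOf (a b n : ℕ) : ℕ := n - offr a b (rword a b n)

def nuv (a b n : ℕ) : ℕ := rrank a b (sOf a b n)

section Rank

variable {a b : ℕ} (ha : 0 < a) (hab : a < b)

lemma rrank_succ (n : ℕ) :
    rrank a b (n + 1) = rrank a b n + (if rword a b n = 0 then 1 else 0) := by
  unfold rrank
  rw [Finset.range_add_one, Finset.filter_insert]
  split_ifs with h
  · rw [Finset.card_insert_of_notMem (by simp)]
  · simp

lemma rrank_mono {m n : ℕ} (h : m ≤ n) : rrank a b m ≤ rrank a b n :=
  Finset.card_le_card (Finset.filter_subset_filter _ (Finset.range_subset_range.2 h))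

lemma rrank_strict {m n : ℕ} (h : m < n) (hm : rword a b m = 0) :
    rrank a b m < rrank a b n := by
  have h1 : rrank a b (m + 1) ≤ rrank a b n := rrank_mono (by omega)
  rw [rrank_succ, if_pos hm] at h1
  omega

lemma exists_start : ∀ N v, v < rrank a b N → ∃ x, x < N ∧ rword a b x = 0 ∧ rrank a b x = v := by
  intro N
  induction N with
  | zero => intro v hv; simp [rrank] at hv
  | succ N ih =>
    intro v hv
    rw [rrank_succ] at hv
    by_cases hN : rword a b N = 0
    · rw [if_pos hN] at hv
      rcases lt_or_ge v (rrank a b N) with h | h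
      · obtain ⟨x, hx1, hx2, hx3⟩ := ih v h
        exact ⟨x, by omega, hx2, hx3⟩
      · exact ⟨N, by omega, hN, by omega⟩
    · rw [if_neg hN] at hv
      obtain ⟨x, hx1, hx2, hx3⟩ := ih v (by omega)
      exact ⟨x, by omega, hx2, hx3⟩

include ha hab

lemma offr_le (n : ℕ) : offr a b (rword a b n) ≤ n ∧ rword a b (sOf a b n) = 0 := by
  unfold sOf
  rcases rcases4 ha hab n with h | h | h | h
  · constructor
    · rw [h]; simp [offr]
    · rw [show n - offr a b (rword a b n) = n by rw [h]; simp [offr]]; exact h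
  · obtain ⟨_, _, h1, h2⟩ := (F1 ha hab n).mp h
    rw [h]; simpa [offr] using ⟨h1, h2⟩
  · obtain ⟨_, h1, h2, _⟩ := (F2 ha hab n).mp h
    rw [h]; simpa [offr] using ⟨h1, h2⟩
  · obtain ⟨h1, h2⟩ := (F3 ha hab n).mp h
    rw [h]; simpa [offr] using ⟨h1, h2⟩

lemma sOf_start {x : ℕ} (hx : rword a b x = 0) : sOf a b x = x := by
  unfold sOf; rw [hx]; simp [offr]

lemma start_of_sOf (n : ℕ) : rword a b (sOf a b n) = 0 := (offr_le ha hab n).2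

lemma sOf_le (n : ℕ) : sOf a b n ≤ n := Nat.sub_le _ _

lemma sOf_add (n : ℕ) : sOf a b n + offr a b (rword a b n) = n := by
  have := (offr_le ha hab n).1
  unfold sOf
  omega

end Rank

lemma mex_eq {S : Set ℕ} {c : ℕ} (h1 : c ∉ S) (h2 : ∀ v < c, v ∈ S) : mex S = c := by
  unfold mex
  have hc : c ∈ {m | m ∉ S} := h1
  apply le_antisymm (Nat.sInf_le hc)
  by_contra hlt
  push_neg at hlt
  have hmem : sInf {m | m ∉ S} ∈ {m | m ∉ S} := Nat.sInf_mem ⟨c, hc⟩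
  exact hmem (h2 _ hlt)

section Main

variable {a b : ℕ} (ha : 0 < a) (hab : a < b) (hb : b ≠ 2 * a)
variable {G : ℕ → ℕ} (hG : IsGrundy {a, b, a + b} G)

include ha hab hb hG

lemma G_eq_nuv : ∀ n, G n = nuv a b n := by
  intro n
  induction n using Nat.strong_induction_on with
  | _ n IH =>
    rw [hG n]
    apply mex_eq
    · -- (A) nuv n is not an option value
      rintro ⟨t, ht0, htX, htn, hval⟩
      simp only [Set.mem_insert_iff, Set.mem_singleton_iff] at htX
      push_neg at htX
      obtain ⟨hta, htb, htab⟩ := htX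
      set m := n - t with hm
      have hmn : m < n := by omega
      rw [IH m hmn] at hval
      -- same start
      have hstartm := start_of_sOf ha hab m
      have hstartn := start_of_sOf ha hab n
      have hxy : sOf a b m = sOf a b n := by
        rcases lt_trichotomy (sOf a b m) (sOf a b n) with h | h | h
        · have := rrank_strict (a := a) (b := b) h hstartm
          unfold nuv at hval; omega
        · exact h
        · have := rrank_strict (a := a) (b := b) h hstartn
          unfold nuv at hval; omega
      have hm2 := sOf_add ha hab m
      have hn2 := sOf_add ha hab n
      rw [hxy] at hm2
      -- case on roles
      rcases rcases4 ha hab m with h1 | h1 | h1 | h1 <;>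
        rcases rcases4 ha hab n with h2 | h2 | h2 | h2 <;>
        rw [h1] at hm2 <;> rw [h2] at hn2 <;>
        norm_num [offr] at hm2 hn2 <;>
        try omega
      -- remaining case: rword m = 1, rword n = 2
      obtain ⟨_, hbn, _, hne1⟩ := (F2 ha hab n).mp h2
      rw [show n - b + a = m by omega] at hne1
      exact hne1 h1
    · -- (B) every smaller value is an option value
      intro v hv
      unfold nuv at hv
      obtain ⟨x, hx1, hx0, hxr⟩ := exists_start (a := a) (b := b) (sOf a b n) v hv
      have hxn : x < n := lt_of_lt_of_le hx1 (sOf_le ha hab n)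
      by_cases h1 : n - x = a
      · exfalso
        rcases rcases4 ha hab n with h | h | h | h
        · obtain ⟨_, _, hc1⟩ := (F0 ha hab n).mp h
          exact hc1 ⟨by omega, by rw [show n - a = x by omega]; exact hx0⟩
        · have hs : sOf a b n = x := by
            unfold sOf; rw [h]; norm_num [offr]; try omega
          omega
        · obtain ⟨_, hbn, _, _⟩ := (F2 ha hab n).mp h
          have hs : sOf a b n = n - b := by
            unfold sOf; rw [h]; norm_num [offr]
          have hlt : sOf a b n < x := by omega
          have := rrank_strict (a := a) (b := b) hlt (start_of_sOf ha hab n)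
          omega
        · obtain ⟨hbn, _⟩ := (F3 ha hab n).mp h
          have hs : sOf a b n = n - (a + b) := by
            unfold sOf; rw [h]; norm_num [offr]
          have hlt : sOf a b n < x := by omega
          have := rrank_strict (a := a) (b := b) hlt (start_of_sOf ha hab n)
          omega
      · by_cases h2 : n - x = a + b
        · exfalso
          have h3 : rword a b n = 3 := by
            rw [F3 ha hab]
            exact ⟨by omega, by rw [show n - (a + b) = x by omega]; exact hx0⟩
          have hs : sOf a b n = n - (a + b) := by
            unfold sOf; rw [h3]; norm_num [offr]
          omega
        · by_cases h3 : n - x = b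
          · by_cases hA : rword a b (x + a) = 1
            · refine ⟨b - a, by omega, ?_, by omega, ?_⟩
              · simp only [Set.mem_insert_iff, Set.mem_singleton_iff]
                push_neg
                omega
              · rw [show n - (b - a) = x + a by omega, IH (x + a) (by omega)]
                unfold nuv
                have hs : sOf a b (x + a) = x := by
                  unfold sOf; rw [hA]; norm_num [offr]; try omega
                rw [hs]; exact hxr
            · exfalso
              have hsec := second ha hab hx0 hA
              rw [show x + b = n by omega] at hsec
              have hs : sOf a b n = n - b := by
                unfold sOf; rw [hsec]; norm_num [offr]
              omega
          · refine ⟨n - x, by omega, ?_, by omega, ?_⟩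
            · simp only [Set.mem_insert_iff, Set.mem_singleton_iff]
              push_neg
              omega
            · rw [show n - (n - x) = x by omega, IH x hxn]
              unfold nuv
              rw [sOf_start ha hab hx0]
              exact hxr

lemma final : ∃ p s : ℕ, 0 < p ∧ ∀ n, G (n + p) = G n + s := by
  obtain ⟨q, hq, hper⟩ := rword_periodic ha hab
  refine ⟨q, rrank a b q, hq, ?_⟩
  have hrank : ∀ n, rrank a b (n + q) = rrank a b n + rrank a b q := by
    intro n
    induction n with
    | zero => simp [rrank]
    | succ n ih =>
      rw [show n + 1 + q = (n + q) + 1 by omega, rrank_succ, rrank_succ, hper n, ih]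
      ring
  intro n
  rw [G_eq_nuv ha hab hb hG, G_eq_nuv ha hab hb hG]
  unfold nuv
  have hr := hper n
  have hoff := (offr_le ha hab n).1
  have hs : sOf a b (n + q) = sOf a b n + q := by
    unfold sOf
    rw [hr]
    omega
  rw [hs, hrank]

end Main

theorem stmt_3 (a b : ℕ) (ha : 0 < a) (hab : a < b) (hb : b ≠ 2 * a)
    (G : ℕ → ℕ) (hG : IsGrundy {a, b, a + b} G) :
    ∃ p s : ℕ, 0 < p ∧ ∀ n, G (n + p) = G n + s :=
  final ha hab hb hG
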